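/- Let p be an odd prime, l ≥ 1, q = p^l, and α, β ∈ F_{q^2}. Suppose p_{α,β}(t) = t^{q+1} + α^q·t^q + α·t + (β + β^q) has q+1 distinct roots in F_{q^2}. Let k be an integer with 0 ≤ k ≤ q^2, and write k = wq + z with integers w, z satisfying 0 ≤ z < q. If w = 0, or if there exists an integer i with 1 ≤ i ≤ l such that p^i divides w and z ≢ −1 (mod p^i), then deg_{α,β}(t^k) < q, i.e., the remainder of t^k upon division by p_{α,β}(t) has degree strictly less than q. -/

import Mathlib

open Polynomial

section Aux
open Nat
-- digit criterion: if some base-p digit of j exceeds that of k, then p ∣ choose k j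
lemma dvd_choose_of_digit_lt (p : ℕ) (hp : p.Prime) :
    ∀ (s k j : ℕ), k / p^s % p < j / p^s % p → p ∣ k.choose j := by
  have : Fact p.Prime := ⟨hp⟩
  intro s
  induction s with
  | zero =>
    intro k j h
    simp only [pow_zero, Nat.div_one] at h
    have hl := Choose.choose_modEq_choose_mod_mul_choose_div_nat (n := k) (k := j) (p := p)
    rw [Nat.choose_eq_zero_of_lt h, zero_mul] at hl
    exact (Nat.modEq_zero_iff_dvd).mp hl
  | succ s ih =>
    intro k j h
    have hk : k / p ^ (s+1) = (k / p) / p ^ s := by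
      rw [Nat.div_div_eq_div_mul, pow_succ']
    have hj : j / p ^ (s+1) = (j / p) / p ^ s := by
      rw [Nat.div_div_eq_div_mul, pow_succ']
    rw [hk, hj] at h
    have hdvd := ih (k / p) (j / p) h
    have hl := Choose.choose_modEq_choose_mod_mul_choose_div_nat (n := k) (k := j) (p := p)
    exact (Nat.modEq_zero_iff_dvd).mp (hl.trans ((Nat.modEq_zero_iff_dvd).mpr (Dvd.dvd.mul_left hdvd _)))

lemma pred_mul_div (n a : ℕ) (hn : 1 ≤ n) (ha : 1 ≤ a) : (a * n - 1) / n = a - 1 := by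
  have h1 : (a - 1) * n = a * n - n := by rw [Nat.sub_mul, one_mul]
  have h2 : a * n - 1 = (n - 1) + (a - 1) * n := by
    have hn2 : n ≤ a * n := Nat.le_mul_of_pos_left n ha
    omega
  rw [h2, Nat.add_mul_div_right _ _ (by omega : 0 < n), Nat.div_eq_of_lt (by omega)]
  omega

lemma pred_mul_mod (n a : ℕ) (hn : 1 ≤ n) (ha : 1 ≤ a) : (a * n - 1) % n = n - 1 := by
  have h1 : (a - 1) * n = a * n - n := by rw [Nat.sub_mul, one_mul]
  have h2 : a * n - 1 = (n - 1) + (a - 1) * n := by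
    have hn2 : n ≤ a * n := Nat.le_mul_of_pos_left n ha
    omega
  rw [h2, Nat.add_mul_mod_self_right, Nat.mod_eq_of_lt (by omega)]

lemma all_digits_zero (p : ℕ) (hp : 2 ≤ p) :
    ∀ (i m : ℕ), (∀ r < i, m / p^r % p = 0) → p^i ∣ m := by
  intro i
  induction i with
  | zero => simp
  | succ i ih =>
    intro m h
    have h0 : p ∣ m := by
      have := h 0 (by omega); simpa [Nat.dvd_iff_mod_eq_zero] using this
    obtain ⟨m', rfl⟩ := h0
    have : p ^ i ∣ m' := by
      apply ih
      intro r hr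
      have := h (r+1) (by omega)
      rwa [_root_.pow_succ', Nat.mul_div_mul_left _ _ (by omega : 0 < p)] at this
    rw [_root_.pow_succ']
    exact mul_dvd_mul_left p this

lemma all_digits_pm1 (p : ℕ) (hp : 2 ≤ p) :
    ∀ (i z : ℕ), (∀ r < i, z / p^r % p = p - 1) → p^i ∣ (z + 1) := by
  intro i
  induction i with
  | zero => simp
  | succ i ih =>
    intro z h
    have h0 : z % p = p - 1 := by simpa using h 0 (by omega)
    have hdm := Nat.div_add_mod z p
    have hz1 : z + 1 = p * (z / p + 1) := by
      rw [Nat.mul_add, mul_one]; omega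
    have hih : p ^ i ∣ (z / p + 1) := by
      apply ih
      intro r hr
      have := h (r+1) (by omega)
      rwa [_root_.pow_succ', ← Nat.div_div_eq_div_mul] at this
    rw [hz1, _root_.pow_succ']
    exact mul_dvd_mul_left p hih

lemma sub_one_digit (p i r m : ℕ) (hp : 2 ≤ p) (h : p^i ∣ m) (hm : 1 ≤ m) (hr : r < i) :
    (m - 1) / p^r % p = p - 1 := by
  obtain ⟨t, rfl⟩ := h
  have ht1 : 1 ≤ t := by
    rcases Nat.eq_zero_or_pos t with h0 | h0
    · simp [h0] at hm
    · exact h0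
  obtain ⟨s, rfl⟩ : ∃ s, i = r + 1 + s := ⟨i - r - 1, by omega⟩
  have hpr : 0 < p ^ r := pow_pos (by omega : 0 < p) r
  have hps : 0 < p ^ s * t * p := Nat.mul_pos (Nat.mul_pos (pow_pos (by omega : 0 < p) s) ht1) (by omega)
  have key : p ^ (r+1+s) * t = (p ^ s * t * p) * p ^ r := by ring
  rw [key, pred_mul_div _ _ hpr hps, pred_mul_mod p (p ^ s * t) (by omega) (Nat.mul_pos (pow_pos (by omega : 0 < p) s) ht1)]

lemma low_digit (p l r w x : ℕ) (hp : 2 ≤ p) (hr : r < l) :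
    (w * p^l + x) / p^r % p = x / p^r % p := by
  obtain ⟨s, rfl⟩ : ∃ s, l = r + 1 + s := ⟨l - r - 1, by omega⟩
  have e : w * p^(r+1+s) + x = x + (w * p^s * p) * p^r := by ring
  rw [e, Nat.add_mul_div_right _ _ (pow_pos (by omega : 0 < p) r),
    Nat.add_mul_mod_self_right]

lemma high_digit (p l r w x : ℕ) (hp : 2 ≤ p) (hx : x < p^l) :
    (w * p^l + x) / p^(l+r) % p = w / p^r % p := by
  have h1 : (w * p^l + x) / p^l = w := by
    rw [add_comm, Nat.add_mul_div_right _ _ (pow_pos (by omega : 0 < p) l),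
      Nat.div_eq_of_lt hx, zero_add]
  rw [pow_add, ← Nat.div_div_eq_div_mul, h1]

lemma dvd_digit_zero (p i r w : ℕ) (hp : 2 ≤ p) (h : p^i ∣ w) (hr : r < i) :
    w / p^r % p = 0 := by
  obtain ⟨t, rfl⟩ := h
  obtain ⟨s, rfl⟩ : ∃ s, i = r + 1 + s := ⟨i - r - 1, by omega⟩
  have e : p^(r+1+s) * t = (p^s * t * p) * p^r := by ring
  rw [e, Nat.mul_div_cancel _ (pow_pos (by omega : 0 < p) r), Nat.mul_mod_left]

lemma key_dvd (p l i w z m : ℕ) (hp : p.Prime) (hi1 : 1 ≤ i) (hil : i ≤ l)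
    (hw : p^i ∣ w) (hz1 : ¬ p^i ∣ (z+1)) (hz : z < p^l) (hm1 : 1 ≤ m) (hm : m < p^l) :
    p ∣ (w * p^l + z).choose (m * p^l + (m-1)) := by
  have hp2 : 2 ≤ p := hp.two_le
  by_cases hpm : p^i ∣ m
  · have : ¬ ∀ r < i, z / p^r % p = p - 1 := fun ha => hz1 (all_digits_pm1 p hp2 i z ha)
    push_neg at this
    obtain ⟨r, hr, hne⟩ := this
    apply dvd_choose_of_digit_lt p hp r
    rw [low_digit p l r w z hp2 (lt_of_lt_of_le hr hil),
      low_digit p l r m (m-1) hp2 (lt_of_lt_of_le hr hil),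
      sub_one_digit p i r m hp2 hpm hm1 hr]
    have := Nat.mod_lt (z / p^r) (show 0 < p by omega)
    omega
  · have : ¬ ∀ r < i, m / p^r % p = 0 := fun ha => hpm (all_digits_zero p hp2 i m ha)
    push_neg at this
    obtain ⟨r, hr, hne⟩ := this
    apply dvd_choose_of_digit_lt p hp (l + r)
    rw [high_digit p l r w z hp2 hz, high_digit p l r m (m-1) hp2 (by omega),
      dvd_digit_zero p i r w hp2 hw hr]
    omega

end Aux

/-- Lemma 8: if `k = wq + z` with `0 ≤ z < q`, `0 ≤ k ≤ q^2`, and either `w = 0` or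
there is `1 ≤ i ≤ l` with `p^i ∣ w` and `z ≢ -1 (mod p^i)`, then the remainder of
`t^k` modulo `p_{α,β}(t)` has degree `< q` (for any `α, β` such that `p_{α,β}` has
`q+1` distinct roots). -/

theorem degree_reduction_condition (p l q : ℕ) (hp : p.Prime) (hodd : Odd p) (hl : 1 ≤ l)
    (hq : q = p ^ l) (F : Type*) [Field F] [Fintype F] (hF : Fintype.card F = q ^ 2)
    (α β : F) (σ : Fin (q + 1) → F) (hσinj : Function.Injective σ)
    (hσroot : ∀ i, (σ i) ^ (q + 1) + α ^ q * (σ i) ^ q + α * (σ i) + (β + β ^ q) = 0)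
    (k w z : ℕ) (hk : k ≤ q ^ 2) (hkwz : k = w * q + z) (hz : z < q)
    (hcond : w = 0 ∨ ∃ i, 1 ≤ i ∧ i ≤ l ∧ p ^ i ∣ w ∧ ¬ (p ^ i ∣ (z + 1))) :
    ((X ^ k : F[X]) %ₘ
      (X ^ (q + 1) + C (α ^ q) * X ^ q + C α * X + C (β + β ^ q))).degree < (q : ℕ) := by
  have hp2 := hp.two_le
  have hq2 : 2 ≤ q := by
    rw [hq]; calc 2 ≤ p := hp2
    _ ≤ p ^ l := Nat.le_self_pow (by omega) p
  -- characteristic of F is p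
  haveI hcharF : CharP F p := by
    obtain ⟨n, hpr, hcard⟩ := FiniteField.card F (ringChar F)
    have hdvd : ringChar F ∣ p ^ (2 * l) := by
      have hql : p ^ (2 * l) = q ^ 2 := by rw [hq, ← pow_mul, mul_comm]
      rw [hql, ← hF, hcard]
      exact dvd_pow_self _ (by positivity)
    have : ringChar F = p := by
      rw [← Nat.prime_dvd_prime_iff_eq hpr hp]
      exact hpr.dvd_of_dvd_pow hdvd
    exact this ▸ ringChar.charP F
  haveI : Fact p.Prime := ⟨hp⟩
  set a : F := α ^ q with ha
  set P : F[X] := X ^ (q + 1) + C (α ^ q) * X ^ q + C α * X + C (β + β ^ q) with hP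
  set Y : F[X] := X + C a with hY
  set d : F := α ^ (q + 1) - (β + β ^ q) with hd
  have haq : a ^ q = α := by
    rw [ha, ← pow_mul]
    have hqq : q * q = Fintype.card F := by rw [hF, pow_two]
    rw [hqq, FiniteField.pow_card]
  have hYq : Y ^ q = X ^ q + C α := by
    rw [hY, hq, add_pow_char_pow, ← C_pow, ← hq, haq]
  have hPY : P = Y ^ (q + 1) - C d := by
    rw [pow_succ, hYq, hY, hd, hP, ha]
    simp only [C_sub, C_add, C_mul, C_pow, pow_succ]
    ring
  have hmY : (Y : F[X]).Monic := by rw [hY]; exact monic_X_add_C a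
  have hmYq : ((Y : F[X]) ^ (q + 1)).Monic := hmY.pow _
  have hdegYpow : ∀ n : ℕ, ((Y : F[X]) ^ n).degree = (n : WithBot ℕ) := by
    intro n
    rw [degree_pow, hY, degree_X_add_C]
    simp
  have hPmonic : P.Monic := by
    rw [hPY, sub_eq_add_neg]
    apply hmYq.add_of_left
    apply lt_of_le_of_lt (degree_neg (C d) ▸ degree_C_le)
    rw [hdegYpow]
    exact_mod_cast Nat.succ_pos q
  have hdegP : P.degree = ((q + 1 : ℕ) : WithBot ℕ) := by
    rw [hPY, sub_eq_add_neg, degree_add_eq_left_of_degree_lt, hdegYpow]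
    rw [hdegYpow]
    apply lt_of_le_of_lt (degree_neg (C d) ▸ degree_C_le)
    exact_mod_cast Nat.succ_pos q
  rcases hcond with hw0 | ⟨i, hi1, hil, hwi, hzi⟩
  · -- w = 0 : k = z < q, X^k is its own remainder
    subst hw0
    have hkz : k = z := by omega
    have hdX : (X ^ k : F[X]).degree = (k : WithBot ℕ) := degree_X_pow k
    rw [(modByMonic_eq_self_iff hPmonic).mpr (by rw [hdX, hdegP]; exact_mod_cast by omega),
      hdX]
    exact_mod_cast by omega
  · -- main case
    set r : F[X] := ∑ j ∈ Finset.range (k + 1),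
        C ((k.choose j : F) * (-a) ^ (k - j) * d ^ (j / (q + 1))) * Y ^ (j % (q + 1)) with hr
    have hdvd : P ∣ X ^ k - r := by
      have hXk : (X : F[X]) ^ k = ∑ j ∈ Finset.range (k + 1),
          Y ^ j * (-C a) ^ (k - j) * (k.choose j : F[X]) := by
        have : (X : F[X]) = Y + (-C a) := by rw [hY]; ring
        rw [this, add_pow]
      rw [hXk, hr, ← Finset.sum_sub_distrib]
      apply Finset.dvd_sum
      intro j hj
      have hfactor : Y ^ j * (-C a) ^ (k - j) * (k.choose j : F[X]) -
          C ((k.choose j : F) * (-a) ^ (k - j) * d ^ (j / (q + 1))) * Y ^ (j % (q + 1)) =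
          (Y ^ j - C (d ^ (j / (q + 1))) * Y ^ (j % (q + 1))) *
            ((-C a) ^ (k - j) * (k.choose j : F[X])) := by
        simp only [C_mul, C_pow, C_neg, map_natCast]
        ring
      rw [hfactor]
      apply Dvd.dvd.mul_right
      have hYj : Y ^ j = (Y ^ (q + 1)) ^ (j / (q + 1)) * Y ^ (j % (q + 1)) := by
        rw [← pow_mul, ← pow_add]
        congr 1
        exact (Nat.div_add_mod j (q + 1)).symm
      rw [hYj, C_pow, ← sub_mul]
      apply Dvd.dvd.mul_right
      have := sub_dvd_pow_sub_pow (Y ^ (q + 1)) (C d) (j / (q + 1))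
      rwa [← hPY] at this
    have hdegr : r.degree < ((q : ℕ) : WithBot ℕ) := by
      rw [hr]
      apply lt_of_le_of_lt (degree_sum_le _ _)
      rw [Finset.sup_lt_iff (show (⊥ : WithBot ℕ) < ((q : ℕ) : WithBot ℕ) from WithBot.bot_lt_coe _)]
      intro j hj
      by_cases hsq : j % (q + 1) = q
      · have hchoose : (k.choose j : F) = 0 := by
          have hA := (Nat.div_add_mod j (q + 1)).symm
          rw [hsq] at hA
          obtain ⟨A, hA⟩ : ∃ A, j = (q + 1) * A + q := ⟨_, hA⟩
          have hjm : j = (A + 1) * q + ((A + 1) - 1) := by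
            rw [Nat.add_sub_cancel, hA]; ring
          have hjk : j ≤ k := Nat.lt_succ_iff.mp (Finset.mem_range.mp hj)
          have hmq : A + 1 < q := by
            by_contra hcon
            push_neg at hcon
            have e : j + 1 = (A + 1) * (q + 1) := by rw [hA]; ring
            have h1 : q * (q + 1) ≤ (A + 1) * (q + 1) := Nat.mul_le_mul_right _ hcon
            have h2 : q * (q + 1) = q ^ 2 + q := by ring
            omega
          have hpd := key_dvd p l i w z (A + 1) hp hi1 hil hwi hzi
            (by rw [← hq]; exact hz) (by omega) (by rw [← hq]; exact hmq)
          rw [← hq] at hpd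
          rw [hkwz, hjm]
          exact (CharP.cast_eq_zero_iff F p _).mpr hpd
        rw [hchoose]
        simp only [zero_mul, map_zero, degree_zero]
        exact WithBot.bot_lt_coe _
      · have hq1pos : 0 < q + 1 := by omega
        have hslt : j % (q + 1) < q := by
          have := Nat.mod_lt j hq1pos
          omega
        apply lt_of_le_of_lt (degree_mul_le _ _)
        rw [hdegYpow]
        apply lt_of_le_of_lt (add_le_add degree_C_le le_rfl)
        rw [zero_add]
        exact_mod_cast hslt
    have hrem : (X ^ k : F[X]) %ₘ P = r := by
      have h0 : (X ^ k - r) %ₘ P = 0 := (modByMonic_eq_zero_iff_dvd hPmonic).mpr hdvd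
      have h2 : r %ₘ P = r := (modByMonic_eq_self_iff hPmonic).mpr (by
        rw [hdegP]
        exact hdegr.trans_le (by exact_mod_cast Nat.le_succ q))
      calc (X ^ k : F[X]) %ₘ P = ((X ^ k - r) + r) %ₘ P := by ring_nf
        _ = (X ^ k - r) %ₘ P + r %ₘ P := add_modByMonic _ _
        _ = r := by rw [h0, h2, zero_add]
    rw [hrem]
    exact hdegr
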